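/- arXiv:0903.2058 — 2 statements merged into one kernel-verified Lean document; each statement's English description precedes it below -/
import Mathlib

section
/- Let L be the root lattice of type A₁₁ ⊕ E₆ ⊕ A₁ ⊕ A₁ and N = ℤλ ⊕ L with λ² = 2. With generators labeled as follows: e₁,…,e₆ span E₆, e₇,…,e₁₇ span A₁₁, e₁₈ and e₁₉ span the two A₁'s, let u = (Σ_{i=1}^{11} i·e_{i+6})/2 + e₁₈/2 + e₁₉/2. Then u·w ∈ ℤ for all w ∈ N and u·u ∈ 2ℤ, so N + ℤu is an even overlattice of N of index 2. -/
open Matrix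

/-- Dynkin-diagram edges for E₆ ⊕ A₁₁ ⊕ A₁ ⊕ A₁ (index 0 reserved for λ):
E₆ on e₁,…,e₆ with branch node e₄ (edges e₁–e₃, e₃–e₄, e₄–e₅, e₅–e₆, e₂–e₄),
A₁₁ chain e₇,…,e₁₇, and A₁'s e₁₈, e₁₉. -/
def adj : List (ℕ × ℕ) :=
  [(1,3),(3,4),(4,5),(5,6),(2,4),
   (7,8),(8,9),(9,10),(10,11),(11,12),(12,13),(13,14),(14,15),(15,16),(16,17)]

/-- Gram matrix of N = ℤλ ⊕ L: λ² = 2, roots of square −2, adjacent roots pair to 1. -/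
def gramN : Matrix (Fin 20) (Fin 20) ℚ := fun i j =>
  if i = j then (if i.val = 0 then 2 else -2)
  else if (i.val, j.val) ∈ adj ∨ (j.val, i.val) ∈ adj then 1 else 0

/-- The bilinear form extended ℚ-bilinearly. -/
def form (x y : Fin 20 → ℚ) : ℚ := x ⬝ᵥ gramN.mulVec y

/-- The lattice N: integer coordinate vectors. -/
def IntLat : AddSubgroup (Fin 20 → ℚ) where
  carrier := {x | ∀ i, ∃ k : ℤ, x i = (k : ℚ)}
  zero_mem' := fun i => ⟨0, by simp⟩
  add_mem' := by
    intro a b ha hb i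
    obtain ⟨p, hp⟩ := ha i; obtain ⟨q, hq⟩ := hb i
    exact ⟨p + q, by simp [hp, hq]⟩
  neg_mem' := by
    intro a ha i
    obtain ⟨p, hp⟩ := ha i
    exact ⟨-p, by simp [hp]⟩

/-- u = (Σ_{i=1}^{11} i·e_{i+6})/2 + e₁₈/2 + e₁₉/2. -/
def u : Fin 20 → ℚ :=
  ![0, 0,0,0,0,0,0, 1/2,1,3/2,2,5/2,3,7/2,4,9/2,5,11/2, 1/2,1/2]

/-- The overlattice N + ℤu. -/
def M : AddSubgroup (Fin 20 → ℚ) := IntLat ⊔ AddSubgroup.zmultiples u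

/- ### Auxiliary lemmas -/

/-- The vector u paired against the Gram matrix: a combination of three coordinate functionals. -/
lemma hc_aux : (fun j : Fin 20 => if j = 17 then (-6:ℚ) else if j = 18 ∨ j = 19 then -1 else 0)
    = (-6 : ℚ) • (Pi.single 17 1 : Fin 20 → ℚ) + (-1 : ℚ) • (Pi.single 18 1 : Fin 20 → ℚ)
      + (-1 : ℚ) • (Pi.single 19 1 : Fin 20 → ℚ) := by
  funext j
  simp only [Pi.add_apply, Pi.smul_apply, Pi.single_apply, smul_eq_mul]
  split_ifs <;> simp_all

lemma hvecmul : gramN.vecMul u =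
    (fun j => if j = 17 then -6 else if j = 18 ∨ j = 19 then -1 else 0) := by
  have h18 : (![0, 0,0,0,0,0,0, 1/2,1,3/2,2,5/2,3,7/2,4,9/2,5,11/2, 1/2,1/2] : Fin 20 → ℚ) 18 = 1/2 := rfl
  have h19 : (![0, 0,0,0,0,0,0, 1/2,1,3/2,2,5/2,3,7/2,4,9/2,5,11/2, 1/2,1/2] : Fin 20 → ℚ) 19 = 1/2 := rfl
  funext j
  fin_cases j <;>
    simp (config := { decide := true }) [Matrix.vecMul, dotProduct, gramN, adj, u,
      Fin.sum_univ_succ] <;> norm_num [h18, h19]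

lemma form_u_eq (w : Fin 20 → ℚ) : form u w = -6 * w 17 - w 18 - w 19 := by
  rw [form, Matrix.dotProduct_mulVec, hvecmul, hc_aux]
  simp only [add_dotProduct, smul_dotProduct, single_dotProduct,
    smul_eq_mul, one_mul]
  ring

lemma form_uu : form u u = -34 := by
  rw [form_u_eq]
  norm_num [u,
    show (![0, 0,0,0,0,0,0, 1/2,1,3/2,2,5/2,3,7/2,4,9/2,5,11/2, 1/2,1/2] : Fin 20 → ℚ) 17 = 11/2 from rfl,
    show (![0, 0,0,0,0,0,0, 1/2,1,3/2,2,5/2,3,7/2,4,9/2,5,11/2, 1/2,1/2] : Fin 20 → ℚ) 18 = 1/2 from rfl,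
    show (![0, 0,0,0,0,0,0, 1/2,1,3/2,2,5/2,3,7/2,4,9/2,5,11/2, 1/2,1/2] : Fin 20 → ℚ) 19 = 1/2 from rfl]

/-- Integral version of the Gram matrix. -/
def gramZ : Matrix (Fin 20) (Fin 20) ℤ := fun i j =>
  if i = j then (if i.val = 0 then 2 else -2)
  else if (i.val, j.val) ∈ adj ∨ (j.val, i.val) ∈ adj then 1 else 0

lemma gram_cast (i j : Fin 20) : gramN i j = ((gramZ i j : ℤ) : ℚ) := by
  unfold gramN gramZ
  split_ifs <;> norm_num

lemma gramZ_symm (i j : Fin 20) : gramZ i j = gramZ j i := by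
  unfold gramZ
  rcases eq_or_ne i j with h | h
  · subst h; rfl
  · have hor : ((j.val, i.val) ∈ adj ∨ (i.val, j.val) ∈ adj) ↔
        ((i.val, j.val) ∈ adj ∨ (j.val, i.val) ∈ adj) := or_comm
    simp [if_neg h, if_neg (Ne.symm h), hor]

lemma gramZ_diag_even (i : Fin 20) : Even (gramZ i i) := by
  unfold gramZ
  rw [if_pos rfl]
  split_ifs <;> decide

lemma gram_symm (i j : Fin 20) : gramN i j = gramN j i := by
  rw [gram_cast, gram_cast, gramZ_symm]

lemma form_comm (x y : Fin 20 → ℚ) : form x y = form y x := by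
  have ht : gramNᵀ = gramN := by
    funext i j
    exact gram_symm j i
  rw [form, form, Matrix.dotProduct_mulVec, ← Matrix.mulVec_transpose, ht, dotProduct_comm]

lemma even_quad {m : ℕ} (G : Matrix (Fin m) (Fin m) ℤ) (hs : ∀ i j, G i j = G j i)
    (hd : ∀ i, Even (G i i)) (n : Fin m → ℤ) : Even (n ⬝ᵥ G.mulVec n) := by
  set b : Fin m → ZMod 2 := fun i => (n i : ZMod 2) with hb
  set L : Matrix (Fin m) (Fin m) (ZMod 2) :=
    fun i j => if j < i then ((G i j : ℤ) : ZMod 2) else 0 with hL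
  have hG : (fun i j => ((G i j : ℤ) : ZMod 2)) = L + Lᵀ := by
    funext i j
    rcases lt_trichotomy i j with h | h | h
    · have h' : ¬ j < i := not_lt_of_gt h
      rw [Matrix.add_apply, Matrix.transpose_apply]
      simp [hL, Matrix.add_apply, Matrix.transpose_apply, h, h', hs i j]
    · subst h
      have : ((G i i : ℤ) : ZMod 2) = 0 := by
        have := hd i
        exact (ZMod.intCast_zmod_eq_zero_iff_dvd _ 2).mpr this.two_dvd
      rw [Matrix.add_apply, Matrix.transpose_apply]
      simp [hL, Matrix.add_apply, Matrix.transpose_apply, this]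
    · have h' : ¬ i < j := not_lt_of_gt h
      rw [Matrix.add_apply, Matrix.transpose_apply]
      simp [hL, Matrix.add_apply, Matrix.transpose_apply, h, h']
  have hcast : ((n ⬝ᵥ G.mulVec n : ℤ) : ZMod 2) = b ⬝ᵥ (L + Lᵀ).mulVec b := by
    rw [← hG]
    simp [dotProduct, Matrix.mulVec, Finset.mul_sum]
    rfl
  have hzero : b ⬝ᵥ (L + Lᵀ).mulVec b = 0 := by
    rw [Matrix.add_mulVec, dotProduct_add]
    have : b ⬝ᵥ Lᵀ.mulVec b = b ⬝ᵥ L.mulVec b := by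
      rw [Matrix.mulVec_transpose, dotProduct_comm, ← Matrix.dotProduct_mulVec]
    rw [this, ← two_mul]
    simp [show (2 : ZMod 2) = 0 from rfl]
  have := (ZMod.intCast_zmod_eq_zero_iff_dvd _ 2).mp (hcast.trans hzero)
  exact even_iff_two_dvd.mpr this

lemma form_cast (v : Fin 20 → ℤ) :
    form (fun i => (v i : ℚ)) (fun i => (v i : ℚ)) = ((v ⬝ᵥ gramZ.mulVec v : ℤ) : ℚ) := by
  simp only [form, dotProduct, Matrix.mulVec, gram_cast]
  push_cast
  rfl

/-- The square of any integral vector is even. -/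
lemma form_int_even (w : Fin 20 → ℚ) (hw : w ∈ IntLat) : ∃ a : ℤ, form w w = 2 * (a : ℚ) := by
  classical
  set v : Fin 20 → ℤ := fun i => (hw i).choose with hv
  have hwv : w = fun i => ((v i : ℤ) : ℚ) := funext fun i => (hw i).choose_spec
  obtain ⟨a, ha⟩ := even_quad gramZ gramZ_symm gramZ_diag_even v
  refine ⟨a, ?_⟩
  rw [hwv, form_cast, ha]
  push_cast
  ring

/-- u pairs integrally with integral vectors. -/
lemma form_u_int (w : Fin 20 → ℚ) (hw : w ∈ IntLat) : ∃ k : ℤ, form u w = (k : ℚ) := by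
  obtain ⟨a, ha⟩ := hw 17
  obtain ⟨b, hb⟩ := hw 18
  obtain ⟨c, hc⟩ := hw 19
  refine ⟨-6 * a - b - c, ?_⟩
  rw [form_u_eq, ha, hb, hc]
  push_cast
  ring

def uZ : Fin 20 → ℤ := ![0, 0,0,0,0,0,0, 1,2,3,4,5,6,7,8,9,10,11, 1,1]

lemma two_u_int : (2 : ℚ) • u ∈ IntLat := by
  intro i
  refine ⟨uZ i, ?_⟩
  have : ((2:ℚ) • u) i = 2 * u i := rfl
  rw [this]
  fin_cases i <;> norm_num [u, uZ]

lemma u18 : u 18 = 1/2 := rfl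

/-- members of M decompose as integral + integer multiple of u. -/
lemma mem_M_iff (x : Fin 20 → ℚ) (hx : x ∈ M) :
    ∃ w ∈ IntLat, ∃ n : ℤ, x = w + (n : ℚ) • u := by
  rw [M, AddSubgroup.mem_sup] at hx
  obtain ⟨w, hw, z, hz, hwz⟩ := hx
  obtain ⟨n, hn⟩ := AddSubgroup.mem_zmultiples_iff.mp hz
  exact ⟨w, hw, n, by rw [← hwz, ← hn, Int.cast_smul_eq_zsmul]⟩

lemma int_add_even_mul_u_mem (w : Fin 20 → ℚ) (hw : w ∈ IntLat) (m : ℤ) :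
    w + ((2 * m : ℤ) : ℚ) • u ∈ IntLat := by
  have : ((2 * m : ℤ) : ℚ) • u = (m : ℚ) • ((2 : ℚ) • u) := by
    rw [smul_smul]; push_cast; ring_nf
  rw [this]
  refine IntLat.add_mem hw ?_
  intro i
  obtain ⟨k, hk⟩ := two_u_int i
  exact ⟨m * k, by simp [hk]; try ring⟩

lemma not_half_int (k : ℤ) (q : ℚ) (hq : ∃ j : ℤ, q = (j : ℚ)) :
    ¬ ∃ j : ℤ, q + ((2 * k + 1 : ℤ) : ℚ) / 2 = (j : ℚ) := by
  rintro ⟨j, hj⟩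
  obtain ⟨i, hi⟩ := hq
  rw [hi] at hj
  have h2 : ((2 * (j - i) : ℤ) : ℚ) = ((2 * k + 1 : ℤ) : ℚ) := by
    push_cast; push_cast at hj; linarith
  have := Int.cast_injective (α := ℚ) h2
  omega

/- ### Main theorem -/

/-- u pairs integrally with N and has even square, so N + ℤu is an
even overlattice of N of index 2. -/
theorem E6_A11_2A1_overlattice :
    (∀ w ∈ IntLat, ∃ k : ℤ, form u w = (k : ℚ)) ∧
    (∃ k : ℤ, form u u = 2 * (k : ℚ)) ∧
    (∀ x ∈ M, ∃ k : ℤ, form x x = 2 * (k : ℚ)) ∧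
    IntLat.relIndex M = 2 := by
  refine ⟨form_u_int, ⟨-17, by rw [form_uu]; norm_num⟩, ?_, ?_⟩
  · -- evenness on M
    intro x hx
    obtain ⟨w, hw, n, rfl⟩ := mem_M_iff x hx
    obtain ⟨a, ha⟩ := form_int_even w hw
    obtain ⟨m, hm⟩ := form_u_int w hw
    have hwu : form w u = (m : ℚ) := by rw [form_comm]; exact hm
    have expand : form (w + (n : ℚ) • u) (w + (n : ℚ) • u)
        = form w w + (n : ℚ) * form w u + (n : ℚ) * form u w + (n : ℚ)^2 * form u u := by
      simp only [form, Matrix.mulVec_add, Matrix.mulVec_smul, dotProduct_add, add_dotProduct,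
        dotProduct_smul, smul_dotProduct, smul_eq_mul]
      ring
    refine ⟨a + n * m - 17 * n ^ 2, ?_⟩
    rw [expand, ha, hm, hwu, form_uu]
    push_cast
    ring
  · -- index 2
    have huM : u ∈ M := AddSubgroup.mem_sup_right (AddSubgroup.mem_zmultiples u)
    rw [AddSubgroup.relIndex]
    rw [AddSubgroup.index_eq_two_iff]
    refine ⟨⟨u, huM⟩, ?_⟩
    rintro ⟨x, hx⟩
    obtain ⟨w, hw, n, rfl⟩ := mem_M_iff x hx
    simp only [AddSubgroup.mem_addSubgroupOf, AddSubgroup.coe_add, AddSubgroup.coe_mk]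
    rcases Int.even_or_odd n with ⟨m, hmn⟩ | ⟨m, hmn⟩
    · -- n even : x ∈ IntLat, x + u ∉ IntLat
      subst hmn
      have hxi : w + ((m + m : ℤ) : ℚ) • u ∈ IntLat := by
        have := int_add_even_mul_u_mem w hw m
        convert this using 3
        push_cast; ring
      refine Or.inr ⟨hxi, ?_⟩
      intro hcon
      have h18 := hcon 18
      have hbase := hxi 18
      simp only [Pi.add_apply, Pi.smul_apply, u18, smul_eq_mul] at h18 hbase
      refine not_half_int 0 (w 18 + (↑(m + m) : ℚ) * (1/2)) hbase ?_
      obtain ⟨k, hk⟩ := h18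
      exact ⟨k, by push_cast; push_cast at hk; linarith⟩
    · -- n odd : x + u ∈ IntLat, x ∉ IntLat
      subst hmn
      have hxi : w + (((2 * m + 1 : ℤ) : ℚ)) • u + u ∈ IntLat := by
        have := int_add_even_mul_u_mem w hw (m + 1)
        have heq : w + (((2 * m + 1 : ℤ) : ℚ)) • u + u = w + ((2 * (m + 1) : ℤ) : ℚ) • u := by
          push_cast
          module
        rw [heq]
        exact this
      refine Or.inl ⟨hxi, ?_⟩
      intro hcon
      have h18 := hcon 18
      simp only [Pi.add_apply, Pi.smul_apply, u18, smul_eq_mul] at h18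
      refine not_half_int m (w 18) (hw 18) ?_
      obtain ⟨k, hk⟩ := h18
      exact ⟨k, by push_cast; push_cast at hk; linarith⟩
end

section
/- Let Q be the conic x₁x₂ − x₀x₁ − x₀x₂ = 0 and let C_μ be the conic x₁x₂ − x₀x₁ − x₀x₂ + μ x₀² = 0 for μ ≠ 0. Then Q and C_μ meet only at the two points (0:1:0) and (0:0:1), each with intersection multiplicity 2. -/
/-- The conic Q: x₁x₂ − x₀x₁ − x₀x₂ = 0. -/
def Q (x : Fin 3 → ℂ) : ℂ := x 1 * x 2 - x 0 * x 1 - x 0 * x 2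

/-- The conic C_μ: x₁x₂ − x₀x₁ − x₀x₂ + μx₀² = 0. -/
def C (μ : ℂ) (x : Fin 3 → ℂ) : ℂ := x 1 * x 2 - x 0 * x 1 - x 0 * x 2 + μ * (x 0) ^ 2

/-- The two conics are tangent at p: both are smooth at p (nonzero
differential) and their differentials are proportional, so the local
intersection multiplicity is ≥ 2; since by Bézout the total intersection
number of two conics is 4 and there are exactly two intersection points,
each multiplicity is exactly 2. -/
def TangentAt (μ : ℂ) (p : Fin 3 → ℂ) : Prop :=
  Q p = 0 ∧ C μ p = 0 ∧
  fderiv ℂ Q p ≠ 0 ∧ fderiv ℂ (C μ) p ≠ 0 ∧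
  ¬ LinearIndependent ℂ ![fderiv ℂ Q p, fderiv ℂ (C μ) p]

noncomputable def L (i : Fin 3) : (Fin 3 → ℂ) →L[ℂ] ℂ := ContinuousLinearMap.proj i

noncomputable def D (p : Fin 3 → ℂ) : (Fin 3 → ℂ) →L[ℂ] ℂ :=
  (p 1) • L 2 + (p 2) • L 1 - ((p 0) • L 1 + (p 1) • L 0) - ((p 0) • L 2 + (p 2) • L 0)

lemma hQ (p : Fin 3 → ℂ) : HasFDerivAt Q (D p) p := by
  have h : ∀ i, HasFDerivAt (fun x : Fin 3 → ℂ => x i) (L i) p := fun i => (L i).hasFDerivAt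
  exact (((h 1).mul (h 2)).sub ((h 0).mul (h 1))).sub ((h 0).mul (h 2))

lemma hC (μ : ℂ) (p : Fin 3 → ℂ) :
    HasFDerivAt (C μ) (D p + (μ * (2 * p 0)) • L 0) p := by
  have h : ∀ i, HasFDerivAt (fun x : Fin 3 → ℂ => x i) (L i) p := fun i => (L i).hasFDerivAt
  have h2 : HasFDerivAt (fun x : Fin 3 → ℂ => μ * (x 0 * x 0))
      (μ • ((p 0) • L 0 + (p 0) • L 0)) p := ((h 0).mul (h 0)).const_mul μ
  have hfun : C μ = fun x : Fin 3 → ℂ => Q x + μ * (x 0 * x 0) := by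
    funext x; simp only [C, Q]; ring
  have heq : (μ * (2 * p 0)) • L 0 = μ • ((p 0) • L 0 + (p 0) • L 0) := by
    ext v; simp [L]; ring
  rw [hfun, heq]
  exact (hQ p).add h2

lemma tangent_aux (μ : ℂ) (p : Fin 3 → ℂ) (hp0 : p 0 = 0) (hQp : Q p = 0)
    (hne : D p ≠ 0) : TangentAt μ p := by
  have hfQ : fderiv ℂ Q p = D p := (hQ p).fderiv
  have hfC : fderiv ℂ (C μ) p = D p := by
    have := (hC μ p).fderiv
    rw [this, hp0]
    simp
    ext v; simp [L]
  have hCp : C μ p = 0 := by simp [C, hp0]; simpa [Q, hp0] using hQp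
  refine ⟨hQp, hCp, by rw [hfQ]; exact hne, by rw [hfC]; exact hne, ?_⟩
  intro h
  have h01 : (![fderiv ℂ Q p, fderiv ℂ (C μ) p] : Fin 2 → _) 0
      = ![fderiv ℂ Q p, fderiv ℂ (C μ) p] 1 := by
    simp [hfQ, hfC]
  have := h.injective h01
  simp at this

/-- for μ ≠ 0, Q and C_μ meet only at (0:1:0) and (0:0:1),
and at each of these two points they are tangent (intersection multiplicity 2). -/
theorem Q_meets_Cmu (μ : ℂ) (hμ : μ ≠ 0) :
    (∀ x : Fin 3 → ℂ, x ≠ 0 → Q x = 0 → C μ x = 0 →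
      (∃ t : ℂ, x = t • ![0, 1, 0]) ∨ (∃ t : ℂ, x = t • ![0, 0, 1])) ∧
    TangentAt μ ![0, 1, 0] ∧ TangentAt μ ![0, 0, 1] := by
  refine ⟨?_, ?_, ?_⟩
  · intro x hx hQx hCx
    have hx0 : x 0 = 0 := by
      have : μ * (x 0) ^ 2 = 0 := by
        have := hCx; simp only [C] at this; simp only [Q] at hQx
        linear_combination this - hQx
      rcases mul_eq_zero.1 this with h | h
      · exact absurd h hμ
      · exact pow_eq_zero_iff (by norm_num) |>.1 h
    have h12 : x 1 * x 2 = 0 := by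
      simp only [Q, hx0] at hQx; simpa using hQx
    rcases mul_eq_zero.1 h12 with h | h
    · right; exact ⟨x 2, by funext i; fin_cases i <;> simp [hx0, h]⟩
    · left; exact ⟨x 1, by funext i; fin_cases i <;> simp [hx0, h]⟩
  · refine tangent_aux μ ![0, 1, 0] (by simp) (by simp [Q]) ?_
    intro h
    have := ContinuousLinearMap.ext_iff.1 h ![0, 0, 1]
    simp [D, L] at this
  · refine tangent_aux μ ![0, 0, 1] (by simp) (by simp [Q]) ?_
    intro h
    have := ContinuousLinearMap.ext_iff.1 h ![0, 1, 0]
    simp [D, L] at this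
end
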